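/- If x ∈ ℝ^K has strictly positive coordinates summing to 1 (x lies in the open simplex) and β̃, β̃' ∈ ℝ^K both satisfy Σ_j β̃_j = 0 and Σ_j β̃'_j = 0, and if ⟨log x, β̃⟩ = ⟨log x, β̃'⟩ for all such x, then β̃ = β̃'. That is, the log-contrast regression coefficients constrained to sum to zero are identifiable. -/

import Mathlib

/-- Identifiability of log-contrast regression coefficients: if two zero-sum
coefficient vectors give the same value `⟨log x, β̃⟩` for every `x` in the open
simplex, then they are equal. -/
theorem stmt7 (K : ℕ) (hK : 2 ≤ K) (b b' : Fin K → ℝ)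
    (hb : ∑ j, b j = 0) (hb' : ∑ j, b' j = 0)
    (h : ∀ x : Fin K → ℝ, (∀ j, 0 < x j) → ∑ j, x j = 1 →
      ∑ j, Real.log (x j) * b j = ∑ j, Real.log (x j) * b' j) :
    b = b' := by
  have hKpos : (0:ℝ) < K := by exact_mod_cast Nat.lt_of_lt_of_le (by norm_num) hK
  have hKne : (K:ℝ) ≠ 0 := ne_of_gt hKpos
  set c : Fin K → ℝ := fun j => b j - b' j with hc
  have hcsum : ∑ j, c j = 0 := by
    simp [hc, Finset.sum_sub_distrib, hb, hb']
  have hkey : ∀ i l : Fin K, i ≠ l → ∀ t : ℝ, 0 < t → t < 2/K →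
      (Real.log t - Real.log (1/K)) * c i
        + (Real.log (2/K - t) - Real.log (1/K)) * c l = 0 := by
    intro i l hil t ht ht2
    set x : Fin K → ℝ := fun j => if j = i then t else if j = l then 2/(K:ℝ) - t else 1/K with hx
    have hpos : ∀ j, 0 < x j := by
      intro j
      simp only [hx]
      split_ifs
      · exact ht
      · linarith
      · positivity
    have hsum : ∑ j, x j = 1 := by
      have h1 : ∑ j, x j = ∑ j, ((x j - 1/K) + 1/K) := by
        apply Finset.sum_congr rfl; intro j _; ring
      rw [h1, Finset.sum_add_distrib, Finset.sum_const, Finset.card_univ, Fintype.card_fin]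
      have h2 : (∑ j ∈ ({i, l} : Finset (Fin K)), (x j - 1/K))
          = ∑ j, (x j - 1/K) := by
        apply Finset.sum_subset (Finset.subset_univ _)
        intro j _ hj
        simp only [Finset.mem_insert, Finset.mem_singleton, not_or] at hj
        simp [hx, hj.1, hj.2]
      rw [← h2, Finset.sum_pair hil]
      have : x i = t := by simp [hx]
      have hxl : x l = 2/(K:ℝ) - t := by simp [hx, hil.symm]
      rw [this, hxl]
      field_simp
      ring_nf
      rw [pow_two, mul_assoc, mul_inv_cancel₀ hKne, mul_one]
    have heq := h x hpos hsum
    have h0 : ∑ j, Real.log (x j) * c j = 0 := by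
      simp only [hc, mul_sub, Finset.sum_sub_distrib, heq, sub_self]
    have h1 : ∑ j, Real.log (x j) * c j
        = ∑ j, ((Real.log (x j) - Real.log (1/K)) * c j + Real.log (1/K) * c j) := by
      apply Finset.sum_congr rfl; intro j _; ring
    rw [h1, Finset.sum_add_distrib, ← Finset.mul_sum, hcsum, mul_zero, add_zero] at h0
    have h2 : (∑ j ∈ ({i, l} : Finset (Fin K)), (Real.log (x j) - Real.log (1/K)) * c j)
        = ∑ j, (Real.log (x j) - Real.log (1/K)) * c j := by
      apply Finset.sum_subset (Finset.subset_univ _)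
      intro j _ hj
      simp only [Finset.mem_insert, Finset.mem_singleton, not_or] at hj
      simp [hx, hj.1, hj.2]
    rw [← h2, Finset.sum_pair hil] at h0
    have hxi : x i = t := by simp [hx]
    have hxl : x l = 2/(K:ℝ) - t := by simp [hx, hil.symm]
    rw [hxi, hxl] at h0
    exact h0
  -- now derive c i = 0 for all i
  have hzero : ∀ i : Fin K, c i = 0 := by
    intro i
    haveI : Nontrivial (Fin K) := Fin.nontrivial_iff_two_le.mpr hK
    obtain ⟨l, hl⟩ := exists_ne i
    have hil : i ≠ l := hl.symm
    -- t = 1/(2K) and t = 3/(2K)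
    have h2Kne : (2:ℝ) * K ≠ 0 := by positivity
    have e1 := hkey i l hil (1/(2*K)) (by positivity)
      (by rw [div_lt_div_iff₀ (by positivity) hKpos]; ring_nf; nlinarith)
    have e2 := hkey i l hil (3/(2*K)) (by positivity)
      (by rw [div_lt_div_iff₀ (by positivity) hKpos]; ring_nf; nlinarith)
    have hsub1 : 2/(K:ℝ) - 1/(2*K) = 3/(2*K) := by field_simp; ring
    have hsub2 : 2/(K:ℝ) - 3/(2*K) = 1/(2*K) := by field_simp; ring
    rw [hsub1] at e1
    rw [hsub2] at e2
    have hlog1 : Real.log (1/(2*(K:ℝ))) = -(Real.log 2 + Real.log K) := by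
      rw [one_div, Real.log_inv, Real.log_mul two_ne_zero hKne]
    have hlog3 : Real.log (3/(2*(K:ℝ))) = Real.log 3 - (Real.log 2 + Real.log K) := by
      rw [Real.log_div (by norm_num) h2Kne, Real.log_mul two_ne_zero hKne]
    have hlogK : Real.log (1/(K:ℝ)) = -Real.log K := by
      rw [one_div, Real.log_inv]
    rw [hlog1, hlog3, hlogK] at e1 e2
    -- e1 : (-(log2+logK) + logK) * c i + (log3 - (log2+logK) + logK) * c l = 0
    have ha : (0:ℝ) < Real.log 2 := Real.log_pos (by norm_num)
    have h23 : Real.log 2 < Real.log 3 := Real.log_lt_log (by norm_num) (by norm_num)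
    have h34 : Real.log 3 < 2 * Real.log 2 := by
      have : Real.log 4 = 2 * Real.log 2 := by
        rw [show (4:ℝ) = 2^2 by norm_num, Real.log_pow]; push_cast; ring
      calc Real.log 3 < Real.log 4 := Real.log_lt_log (by norm_num) (by norm_num)
        _ = 2 * Real.log 2 := this
    have key : ((Real.log 3 - Real.log 2)^2 - (Real.log 2)^2) * c i = 0 := by
      linear_combination (Real.log 3 - Real.log 2) * e2 + Real.log 2 * e1
    have hne : ((Real.log 3 - Real.log 2)^2 - (Real.log 2)^2) ≠ 0 := by nlinarith
    exact (mul_eq_zero.mp key).resolve_left hne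
  funext i
  have := hzero i
  simp only [hc] at this
  linarith
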